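/- Let M be a nonnegative k×k matrix satisfying the detailed-balance condition π_i m_{ij} = π_j m_{ji} for all i,j, where π_i > 0 and Σ_i π_i = 1. Let r_i = Σ_j m_{ij} be the row sums. Then the spectral radius of M satisfies ρ(M) ≥ √(Σ_i π_i r_i²). -/

import Mathlib

/-- The spectral radius of a real square matrix: the supremum of the absolute
values of its complex eigenvalues. -/
noncomputable def specRad {k : ℕ} (M : Matrix (Fin k) (Fin k) ℝ) : ℝ :=
  sSup {x : ℝ | ∃ μ : ℂ, μ ∈ spectrum ℂ (M.map (Complex.ofReal ·)) ∧ x = ‖μ‖}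

open Matrix

/-- For a nonnegative matrix M satisfying detailed balance
`π_i m_{ij} = π_j m_{ji}` with `π_i > 0` and `Σ π_i = 1`, and row sums
`r_i = Σ_j m_{ij}`, the spectral radius satisfies
`ρ(M) ≥ √(Σ_i π_i r_i²)`. -/
theorem stmt_5 {k : ℕ} (M : Matrix (Fin k) (Fin k) ℝ) (π : Fin k → ℝ)
    (hπ : ∀ i, 0 < π i) (hπsum : ∑ i, π i = 1)
    (hM : ∀ i j, 0 ≤ M i j)
    (hDB : ∀ i j, π i * M i j = π j * M j i) :
    Real.sqrt (∑ i, π i * (∑ j, M i j) ^ 2) ≤ specRad M := by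
  classical
  have hk : Nonempty (Fin k) := by
    by_contra h
    rw [not_nonempty_iff] at h
    simp [Finset.univ_eq_empty] at hπsum
  set d : Fin k → ℝ := fun i => Real.sqrt (π i) with hd_def
  have hd : ∀ i, 0 < d i := fun i => Real.sqrt_pos.mpr (hπ i)
  have hd0 : ∀ i, d i ≠ 0 := fun i => (hd i).ne'
  have hd2 : ∀ i, d i * d i = π i := fun i => Real.mul_self_sqrt (hπ i).le
  set D : Matrix (Fin k) (Fin k) ℝ := diagonal d with hD_def
  set E : Matrix (Fin k) (Fin k) ℝ := diagonal (fun i => (d i)⁻¹) with hE_def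
  have hDE : D * E = 1 := by
    rw [hD_def, hE_def, diagonal_mul_diagonal]
    simp [mul_inv_cancel₀, hd0]
  have hED : E * D = 1 := by
    rw [hD_def, hE_def, diagonal_mul_diagonal]
    simp [inv_mul_cancel₀, hd0]
  set S : Matrix (Fin k) (Fin k) ℝ := D * M * E with hS_def
  have hSapp : ∀ i j, S i j = d i * M i j * (d j)⁻¹ := by
    intro i j
    rw [hS_def, hD_def, hE_def, mul_diagonal, diagonal_mul]
  have hSsymm : ∀ i j, S i j = S j i := by
    intro i j
    have h : d i * d i * M i j = d j * d j * M j i := by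
      rw [hd2, hd2]; exact hDB i j
    rw [hSapp, hSapp]
    field_simp [hd0 i, hd0 j]
    linear_combination h
  have hS : S.IsHermitian := by
    ext i j
    simp only [conjTranspose_apply, star_trivial]
    exact hSsymm j i
  have hSd : S *ᵥ d = fun i => d i * (∑ j, M i j) := by
    funext i
    simp only [mulVec, dotProduct]
    rw [Finset.mul_sum]
    refine Finset.sum_congr rfl fun j _ => ?_
    rw [hSapp, mul_assoc, inv_mul_cancel₀ (hd0 j), mul_one]
  -- Euclidean space setup
  set lam := hS.eigenvalues with hlam_def
  set b := hS.eigenvectorBasis with hb_def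
  set x : EuclideanSpace ℝ (Fin k) := (WithLp.equiv 2 (Fin k → ℝ)).symm d with hx_def
  set y : EuclideanSpace ℝ (Fin k) := (WithLp.equiv 2 (Fin k → ℝ)).symm (S *ᵥ d) with hy_def
  have hinner : ∀ u v : EuclideanSpace ℝ (Fin k), (inner ℝ u v : ℝ) = ∑ i, u i * v i := by
    intro u v
    rw [PiLp.inner_apply]
    simp [RCLike.inner_apply, starRingEnd_apply, mul_comm]
  -- symmetry of the bilinear form
  have hbil : ∀ u v : Fin k → ℝ, (∑ i, u i * (S *ᵥ v) i) = ∑ i, (S *ᵥ u) i * v i := by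
    intro u v
    simp only [mulVec, dotProduct, Finset.mul_sum, Finset.sum_mul]
    rw [Finset.sum_comm]
    refine Finset.sum_congr rfl fun i _ => Finset.sum_congr rfl fun j _ => ?_
    rw [hSsymm i j]; ring
  have hby : ∀ i, (inner ℝ (b i) y : ℝ) = lam i * inner ℝ (b i) x := by
    intro i
    rw [hinner, hinner]
    calc ∑ j, (b i) j * (S *ᵥ d) j = ∑ j, (S *ᵥ ⇑(b i)) j * d j := hbil _ _
      _ = ∑ j, (lam i • ⇑(b i)) j * d j := by rw [hS.mulVec_eigenvectorBasis]
      _ = lam i * ∑ j, (b i) j * d j := by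
          rw [Finset.mul_sum]
          exact Finset.sum_congr rfl fun j _ => by simp [mul_assoc]
  have hxx : (inner ℝ x x : ℝ) = 1 := by
    rw [hinner, ← hπsum]
    exact Finset.sum_congr rfl fun i _ => hd2 i
  have hyy : (inner ℝ y y : ℝ) = ∑ i, π i * (∑ j, M i j) ^ 2 := by
    rw [hinner]
    refine Finset.sum_congr rfl fun i _ => ?_
    show (S *ᵥ d) i * (S *ᵥ d) i = _
    rw [hSd]
    simp only
    rw [← hd2 i]; ring
  have h1 : ∑ i, (inner ℝ (b i) x : ℝ) ^ 2 = 1 := by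
    rw [← hxx, ← OrthonormalBasis.sum_inner_mul_inner b x x]
    exact Finset.sum_congr rfl fun i _ => by rw [real_inner_comm x (b i), sq]
  have h2 : ∑ i, (lam i) ^ 2 * (inner ℝ (b i) x : ℝ) ^ 2 = ∑ i, π i * (∑ j, M i j) ^ 2 := by
    rw [← hyy, ← OrthonormalBasis.sum_inner_mul_inner b y y]
    refine Finset.sum_congr rfl fun i _ => ?_
    calc (lam i) ^ 2 * (inner ℝ (b i) x : ℝ) ^ 2
        = (lam i * inner ℝ (b i) x) * (lam i * inner ℝ (b i) x) := by ring
      _ = (inner ℝ (b i) y : ℝ) * (inner ℝ (b i) y : ℝ) := by rw [hby i]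
      _ = (inner ℝ y (b i) : ℝ) * (inner ℝ (b i) y : ℝ) := by rw [real_inner_comm]
  obtain ⟨i0, -, hi0⟩ := Finset.exists_max_image Finset.univ (fun i => (lam i) ^ 2)
    Finset.univ_nonempty
  have hbound : ∑ i, π i * (∑ j, M i j) ^ 2 ≤ (lam i0) ^ 2 := by
    rw [← h2]
    calc ∑ i, (lam i) ^ 2 * (inner ℝ (b i) x : ℝ) ^ 2
        ≤ ∑ i, (lam i0) ^ 2 * (inner ℝ (b i) x : ℝ) ^ 2 :=
          Finset.sum_le_sum fun i _ =>
            mul_le_mul_of_nonneg_right (hi0 i (Finset.mem_univ i)) (sq_nonneg _)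
      _ = (lam i0) ^ 2 := by rw [← Finset.mul_sum, h1, mul_one]
  have hsqrt : Real.sqrt (∑ i, π i * (∑ j, M i j) ^ 2) ≤ |lam i0| := by
    calc Real.sqrt (∑ i, π i * (∑ j, M i j) ^ 2) ≤ Real.sqrt ((lam i0) ^ 2) :=
          Real.sqrt_le_sqrt hbound
      _ = |lam i0| := Real.sqrt_sq_eq_abs _
  -- spectrum over ℂ
  have hspec : lam i0 ∈ spectrum ℝ S := hS.eigenvalues_mem_spectrum_real i0
  have hdet : (algebraMap ℝ (Matrix (Fin k) (Fin k) ℝ) (lam i0) - S).det = 0 := by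
    rw [spectrum.mem_iff] at hspec
    by_contra h
    exact hspec ((isUnit_iff_isUnit_det _).mpr (isUnit_iff_ne_zero.mpr h))
  have hmapeq : (algebraMap ℝ (Matrix (Fin k) (Fin k) ℝ) (lam i0) - S).map (Complex.ofReal ·)
      = algebraMap ℂ (Matrix (Fin k) (Fin k) ℂ) ((lam i0 : ℂ)) - S.map (Complex.ofReal ·) := by
    ext i j
    simp [Matrix.map_apply, Matrix.algebraMap_matrix_apply, apply_ite]
  have hdetC : (algebraMap ℂ (Matrix (Fin k) (Fin k) ℂ) ((lam i0 : ℂ))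
      - S.map (Complex.ofReal ·)).det = 0 := by
    rw [← hmapeq]
    have := (Complex.ofRealHom.map_det (algebraMap ℝ (Matrix (Fin k) (Fin k) ℝ) (lam i0) - S)).symm
    rw [hdet] at this
    simp at this
    exact this
  have hspecC : ((lam i0 : ℂ)) ∈ spectrum ℂ (S.map (Complex.ofReal ·)) := by
    rw [spectrum.mem_iff]
    intro h
    rw [isUnit_iff_isUnit_det, hdetC] at h
    exact (not_isUnit_zero : ¬ IsUnit (0 : ℂ)) h
  have hmapmul : ∀ A B : Matrix (Fin k) (Fin k) ℝ,
      (A * B).map (Complex.ofReal ·) = A.map (Complex.ofReal ·) * B.map (Complex.ofReal ·) :=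
    fun A B => Matrix.map_mul (f := Complex.ofRealHom)
  have hmapone : (1 : Matrix (Fin k) (Fin k) ℝ).map (Complex.ofReal ·) = 1 :=
    Matrix.map_one _ Complex.ofReal_zero Complex.ofReal_one
  -- similarity
  set u : (Matrix (Fin k) (Fin k) ℂ)ˣ :=
    ⟨D.map (Complex.ofReal ·), E.map (Complex.ofReal ·),
      by rw [← hmapmul, hDE, hmapone],
      by rw [← hmapmul, hED, hmapone]⟩ with hu_def
  have hMc : M.map (Complex.ofReal ·) = (↑(u⁻¹) : Matrix (Fin k) (Fin k) ℂ) * (S.map (Complex.ofReal ·)) * (↑u : Matrix (Fin k) (Fin k) ℂ) := by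
    show M.map (Complex.ofReal ·)
      = E.map (Complex.ofReal ·) * S.map (Complex.ofReal ·) * D.map (Complex.ofReal ·)
    rw [← hmapmul, ← hmapmul]
    have hre : E * S * D = M := by
      rw [hS_def]
      have hassoc : E * (D * M * E) * D = (E * D) * (M * (E * D)) := by noncomm_ring
      rw [hassoc, hED, one_mul, mul_one]
    rw [hre]
  have hspecM : ((lam i0 : ℂ)) ∈ spectrum ℂ (M.map (Complex.ofReal ·)) := by
    rw [hMc, spectrum.units_conjugate']
    exact hspecC
  -- finish
  set T : Set ℝ := {r : ℝ | ∃ μ : ℂ, μ ∈ spectrum ℂ (M.map (Complex.ofReal ·)) ∧ r = ‖μ‖} with hT_def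
  have hmemT : |lam i0| ∈ T := ⟨(lam i0 : ℂ), hspecM, by
    rw [Complex.norm_real, Real.norm_eq_abs]⟩
  have hbdd : BddAbove T := by
    have : T = (fun μ : ℂ => ‖μ‖) '' (spectrum ℂ (M.map (Complex.ofReal ·))) := by
      ext r
      constructor
      · rintro ⟨μ, hμ, rfl⟩; exact ⟨μ, hμ, rfl⟩
      · rintro ⟨μ, hμ, rfl⟩; exact ⟨μ, hμ, rfl⟩
    rw [this]
    exact ((Matrix.finite_spectrum _).image _).bddAbove
  exact le_trans hsqrt (le_csSup hbdd hmemT)
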